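/- Let 0 < p, q < 1. Let π₁ : P(S²_{pqφ}) → P(D_p) be the unique unital algebra homomorphism with π₁(f₁) = x, π₁(f₋₁) = x*, π₁(f₀) = x x*, and let π₂ : P(S²_{pqφ}) → P(D_q) be the unique unital algebra homomorphism with π₂(f₁) = y, π₂(f₋₁) = y*, π₂(f₀) = 1. Then ker π₂ is the two-sided ideal of P(S²_{pqφ}) generated by 1 − f₀, and ker π₁ is the two-sided ideal generated by f₁f₋₁ − f₀. -/

import Mathlib

noncomputable section

/-- The free algebra ℂ⟨x, x*⟩ on two generators (generator 0 is `x`, generator 1 is `x*`). -/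
abbrev FreeDisc : Type := FreeAlgebra ℂ (Fin 2)

/-- The defining relation of the quantum disc: x* x = q x x* + (1 - q)·1. -/
def discRel (q : ℝ) : FreeDisc → FreeDisc → Prop := fun a b =>
  a = FreeAlgebra.ι ℂ (1 : Fin 2) * FreeAlgebra.ι ℂ (0 : Fin 2) ∧
  b = (q : ℂ) • (FreeAlgebra.ι ℂ (0 : Fin 2) * FreeAlgebra.ι ℂ (1 : Fin 2)) +
      ((1 : ℂ) - (q : ℂ)) • 1

/-- The polynomial quantum disc algebra P(D_q). -/
abbrev QDisc (q : ℝ) : Type := RingQuot (discRel q)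

/-- The generator x of P(D_q). -/
def xq (q : ℝ) : QDisc q := RingQuot.mkAlgHom ℂ (discRel q) (FreeAlgebra.ι ℂ 0)

/-- The generator x* of P(D_q). -/
def xsq (q : ℝ) : QDisc q := RingQuot.mkAlgHom ℂ (discRel q) (FreeAlgebra.ι ℂ 1)

/-- The free algebra ℂ⟨f₁, f₋₁, f₀⟩ (generator 0 is f₁, generator 1 is f₋₁,
generator 2 is f₀). -/
abbrev FreeSphere : Type := FreeAlgebra ℂ (Fin 3)

/-- f₁ in the free algebra. -/
def F1 : FreeSphere := FreeAlgebra.ι ℂ 0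
/-- f₋₁ in the free algebra. -/
def Fm1 : FreeSphere := FreeAlgebra.ι ℂ 1
/-- f₀ in the free algebra. -/
def F0 : FreeSphere := FreeAlgebra.ι ℂ 2

/-- The defining relations of P(S²_{pqφ}). -/
inductive sphereRel (p q : ℝ) : FreeSphere → FreeSphere → Prop
  | rel1 : sphereRel p q (Fm1 * F1)
      ((q : ℂ) • (F1 * Fm1) + ((p : ℂ) - (q : ℂ)) • F0 + ((1 : ℂ) - (p : ℂ)) • 1)
  | rel2 : sphereRel p q (F0 * F1) ((p : ℂ) • (F1 * F0) + ((1 : ℂ) - (p : ℂ)) • F1)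
  | rel3 : sphereRel p q (Fm1 * F0) ((p : ℂ) • (F0 * Fm1) + ((1 : ℂ) - (p : ℂ)) • Fm1)
  | rel4 : sphereRel p q ((1 - F0) * (F1 * Fm1 - F0)) 0

/-- The polynomial algebra P(S²_{pqφ}). -/
abbrev QSphere (p q : ℝ) : Type := RingQuot (sphereRel p q)

/-- The generator f₁ of P(S²_{pqφ}). -/
def f1 (p q : ℝ) : QSphere p q := RingQuot.mkAlgHom ℂ (sphereRel p q) F1
/-- The generator f₋₁ of P(S²_{pqφ}). -/
def fm1 (p q : ℝ) : QSphere p q := RingQuot.mkAlgHom ℂ (sphereRel p q) Fm1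
/-- The generator f₀ of P(S²_{pqφ}). -/
def f0 (p q : ℝ) : QSphere p q := RingQuot.mkAlgHom ℂ (sphereRel p q) F0

set_option maxHeartbeats 1000000
set_option synthInstance.maxHeartbeats 200000

section Aux

variable {A : Type*} [Ring A] [Algebra ℂ A] (I : TwoSidedIdeal A)

/-- The algebra structure on the quotient by a two-sided ideal. -/
def quotAlgebra : Algebra ℂ I.ringCon.Quotient :=
  { toSMul := inferInstance
    algebraMap := I.ringCon.mk'.comp (algebraMap ℂ A)
    commutes' := by
      intro c x
      induction x using Quotient.inductionOn' with
      | h y =>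
        show I.ringCon.mk' _ * I.ringCon.mk' y = I.ringCon.mk' y * I.ringCon.mk' _
        rw [← map_mul, ← map_mul, Algebra.commutes]
    smul_def' := by
      intro c x
      induction x using Quotient.inductionOn' with
      | h y =>
        show I.ringCon.mk' (c • y) = I.ringCon.mk' _ * I.ringCon.mk' y
        rw [← map_mul]
        exact congrArg _ (Algebra.smul_def c y) }

attribute [local instance] quotAlgebra

/-- The quotient map as an algebra hom. -/
def quotAlgHom : A →ₐ[ℂ] I.ringCon.Quotient :=
  { I.ringCon.mk' with commutes' := fun _ => rfl }

lemma quotAlgHom_eq_iff (a b : A) : quotAlgHom I a = quotAlgHom I b ↔ a - b ∈ I := by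
  change ((a : I.ringCon.Quotient) = (b : A)) ↔ _
  rw [RingCon.eq, I.rel_iff]

lemma quotAlgHom_eq_zero_iff (a : A) : quotAlgHom I a = 0 ↔ a ∈ I := by
  have h0 : (0 : I.ringCon.Quotient) = quotAlgHom I 0 := (map_zero _).symm
  rw [h0, quotAlgHom_eq_iff, sub_zero]

end Aux

attribute [local instance] quotAlgebra

section Main

variable {p q r : ℝ}

/-- The defining relation rel1, in the quotient algebra. -/
lemma sph_rel1 (p q : ℝ) : fm1 p q * f1 p q =
    (q : ℂ) • (f1 p q * fm1 p q) + ((p : ℂ) - (q : ℂ)) • f0 p q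
      + ((1 : ℂ) - (p : ℂ)) • (1 : QSphere p q) := by
  have h := RingQuot.mkAlgHom_rel ℂ (sphereRel.rel1 (p := p) (q := q))
  simpa only [map_mul, map_add, map_smul, map_one, f1, fm1, f0] using h

/-- Generic kernel-identification lemma. -/
lemma ker_eq_span (π : QSphere p q →ₐ[ℂ] QDisc r) (g : QSphere p q)
    (hg : π g = 0)
    (hrel : quotAlgHom (TwoSidedIdeal.span {g}) (fm1 p q)
        * quotAlgHom (TwoSidedIdeal.span {g}) (f1 p q)
      = (r : ℂ) • (quotAlgHom (TwoSidedIdeal.span {g}) (f1 p q)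
          * quotAlgHom (TwoSidedIdeal.span {g}) (fm1 p q)) + ((1:ℂ) - (r:ℂ)) • 1)
    (hc1 : π (f1 p q) = xq r) (hcm1 : π (fm1 p q) = xsq r)
    (w : FreeDisc) (hπ0 : π (f0 p q) = RingQuot.mkAlgHom ℂ (discRel r) w)
    (hρ0 : quotAlgHom (TwoSidedIdeal.span {g}) (f0 p q) =
      FreeAlgebra.lift ℂ ![quotAlgHom (TwoSidedIdeal.span {g}) (f1 p q),
        quotAlgHom (TwoSidedIdeal.span {g}) (fm1 p q)] w) :
    {a : QSphere p q | π a = 0} = (TwoSidedIdeal.span {g} : Set (QSphere p q)) := by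
  set ρ := quotAlgHom (TwoSidedIdeal.span {g}) with hρ
  have hlift : ∀ ⦃x y : FreeDisc⦄, discRel r x y →
      FreeAlgebra.lift ℂ ![ρ (f1 p q), ρ (fm1 p q)] x
        = FreeAlgebra.lift ℂ ![ρ (f1 p q), ρ (fm1 p q)] y := by
    rintro x y ⟨rfl, rfl⟩
    simp only [map_mul, map_add, map_smul, map_one, FreeAlgebra.lift_ι_apply,
      Matrix.cons_val_zero, Matrix.cons_val_one, Matrix.head_cons]
    exact hrel
  set τ : QDisc r →ₐ[ℂ] (TwoSidedIdeal.span {g}).ringCon.Quotient :=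
    RingQuot.liftAlgHom ℂ ⟨FreeAlgebra.lift ℂ ![ρ (f1 p q), ρ (fm1 p q)], hlift⟩ with hτ
  have key : τ.comp π = ρ := by
    apply RingQuot.ringQuot_ext'
    apply FreeAlgebra.hom_ext
    funext i
    fin_cases i
    · show τ (π (f1 p q)) = ρ (f1 p q)
      rw [hc1, hτ]
      show RingQuot.liftAlgHom ℂ _ (RingQuot.mkAlgHom ℂ (discRel r) (FreeAlgebra.ι ℂ 0)) = _
      rw [RingQuot.liftAlgHom_mkAlgHom_apply]
      simp
    · show τ (π (fm1 p q)) = ρ (fm1 p q)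
      rw [hcm1, hτ]
      show RingQuot.liftAlgHom ℂ _ (RingQuot.mkAlgHom ℂ (discRel r) (FreeAlgebra.ι ℂ 1)) = _
      rw [RingQuot.liftAlgHom_mkAlgHom_apply]
      simp
    · show τ (π (f0 p q)) = ρ (f0 p q)
      rw [hπ0, hρ0, hτ, RingQuot.liftAlgHom_mkAlgHom_apply]
  ext a
  simp only [Set.mem_setOf_eq, SetLike.mem_coe]
  constructor
  · intro ha
    rw [← quotAlgHom_eq_zero_iff, ← hρ]
    have : ρ a = τ (π a) := by rw [← key]; rfl
    rw [this, ha, map_zero]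
  · intro ha
    have hgk : g ∈ TwoSidedIdeal.ker π := (TwoSidedIdeal.mem_ker π).2 hg
    have := TwoSidedIdeal.mem_span_iff.1 ha (TwoSidedIdeal.ker π)
      (Set.singleton_subset_iff.2 hgk)
    exact (TwoSidedIdeal.mem_ker π).1 this

end Main

/-- Let π₁ : P(S²_{pqφ}) → P(D_p) be the homomorphism with π₁(f₁) = x,
π₁(f₋₁) = x*, π₁(f₀) = x x*, and π₂ : P(S²_{pqφ}) → P(D_q) the homomorphism with
π₂(f₁) = y, π₂(f₋₁) = y*, π₂(f₀) = 1.  Then ker π₂ is the two-sided ideal generated by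
1 - f₀ and ker π₁ is the two-sided ideal generated by f₁ f₋₁ - f₀. -/
theorem sphere_projection_kernels (p q : ℝ) (hp0 : 0 < p) (hp1 : p < 1)
    (hq0 : 0 < q) (hq1 : q < 1)
    (π₁ : QSphere p q →ₐ[ℂ] QDisc p)
    (hπ₁f1 : π₁ (f1 p q) = xq p)
    (hπ₁fm1 : π₁ (fm1 p q) = xsq p)
    (hπ₁f0 : π₁ (f0 p q) = xq p * xsq p)
    (π₂ : QSphere p q →ₐ[ℂ] QDisc q)
    (hπ₂f1 : π₂ (f1 p q) = xq q)
    (hπ₂fm1 : π₂ (fm1 p q) = xsq q)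
    (hπ₂f0 : π₂ (f0 p q) = 1) :
    {a : QSphere p q | π₂ a = 0} =
      (TwoSidedIdeal.span {(1 : QSphere p q) - f0 p q} : Set (QSphere p q)) ∧
    {a : QSphere p q | π₁ a = 0} =
      (TwoSidedIdeal.span {f1 p q * fm1 p q - f0 p q} : Set (QSphere p q)) := by
  constructor
  · -- kernel of π₂
    have hf0 : quotAlgHom (TwoSidedIdeal.span {(1 : QSphere p q) - f0 p q}) (f0 p q) = 1 := by
      rw [show (1 : (TwoSidedIdeal.span {(1 : QSphere p q) - f0 p q}).ringCon.Quotient)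
          = quotAlgHom _ 1 from (map_one _).symm, quotAlgHom_eq_iff]
      have h1 : (1 : QSphere p q) - f0 p q ∈
          TwoSidedIdeal.span {(1 : QSphere p q) - f0 p q} :=
        TwoSidedIdeal.subset_span (Set.mem_singleton _)
      simpa [neg_sub] using (TwoSidedIdeal.span {(1 : QSphere p q) - f0 p q}).neg_mem h1
    apply ker_eq_span π₂ _ (by rw [map_sub, map_one, hπ₂f0, sub_self]) ?_ hπ₂f1 hπ₂fm1 1
      (by rw [hπ₂f0, map_one]) (by rw [hf0, map_one])
    -- hrel
    have h := congrArg (quotAlgHom (TwoSidedIdeal.span {(1 : QSphere p q) - f0 p q}))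
      (sph_rel1 p q)
    simp only [map_mul, map_add, map_smul, map_one, hf0] at h
    rw [map_smul, map_smul, map_smul, map_mul, map_one, hf0] at h
    rw [h, add_assoc, ← add_smul]
    congr 2
    ring
  · -- kernel of π₁
    have hf0 : quotAlgHom (TwoSidedIdeal.span {f1 p q * fm1 p q - f0 p q}) (f0 p q)
        = quotAlgHom _ (f1 p q) * quotAlgHom _ (fm1 p q) := by
      rw [← map_mul, quotAlgHom_eq_iff]
      have h1 : f1 p q * fm1 p q - f0 p q ∈
          TwoSidedIdeal.span {f1 p q * fm1 p q - f0 p q} :=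
        TwoSidedIdeal.subset_span (Set.mem_singleton _)
      simpa [neg_sub] using (TwoSidedIdeal.span {f1 p q * fm1 p q - f0 p q}).neg_mem h1
    apply ker_eq_span π₁ _
      (by rw [map_sub, map_mul, hπ₁f1, hπ₁fm1, hπ₁f0, sub_self]) ?_ hπ₁f1 hπ₁fm1
      (FreeAlgebra.ι ℂ 0 * FreeAlgebra.ι ℂ 1)
      (by rw [hπ₁f0, map_mul]; rfl)
      (by rw [hf0, map_mul]; simp [FreeAlgebra.lift_ι_apply])
    -- hrel
    have h := congrArg (quotAlgHom (TwoSidedIdeal.span {f1 p q * fm1 p q - f0 p q}))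
      (sph_rel1 p q)
    simp only [map_mul, map_add, map_smul, map_one, hf0] at h
    rw [map_smul, map_smul, map_smul, map_mul, map_one, hf0] at h
    rw [h]
    congr 1
    rw [← add_smul]
    congr 1
    ring
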